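/- Let $R:\mathbb{R}\to\mathbb{R}$ be twice differentiable in $t$ (for fixed $s,n$), and define $r(t):=\tfrac14 R(t)(2s-t-R(t)) - \tfrac12 R'(t)$. If $r'(t) = -\tfrac{r(t)^2}{R(t)} + \tfrac12 R(t)(r(t)+n)$ and $R(t)\neq 0$, then $R''(t) = \tfrac{(R'(t))^2}{2R(t)} + \tfrac38 R(t)^3 - (s-\tfrac12 t)R(t)^2 + \big(\tfrac12 s^2 - n - \tfrac12 - \tfrac12 st + \tfrac18 t^2\big)R(t)$. -/

import Mathlib

theorem stmt_4 (s n : ℝ) (R r : ℝ → ℝ)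
    (hR : Differentiable ℝ R) (hR' : Differentiable ℝ (deriv R))
    (hRne : ∀ t, R t ≠ 0)
    (hr : ∀ t, r t = (1 / 4) * R t * (2 * s - t - R t) - (1 / 2) * deriv R t)
    (hric : ∀ t, deriv r t = -(r t) ^ 2 / R t + (1 / 2) * R t * (r t + n)) :
    ∀ t, deriv (deriv R) t = (deriv R t) ^ 2 / (2 * R t) + (3 / 8) * (R t) ^ 3
      - (s - (1 / 2) * t) * (R t) ^ 2
      + ((1 / 2) * s ^ 2 - n - 1 / 2 - (1 / 2) * s * t + (1 / 8) * t ^ 2) * R t := by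
  intro t
  have hreq : r = fun t => (1 / 4) * R t * (2 * s - t - R t) - (1 / 2) * deriv R t :=
    funext hr
  have hDR : HasDerivAt R (deriv R t) t := (hR t).hasDerivAt
  have hDR' : HasDerivAt (deriv R) (deriv (deriv R) t) t := (hR' t).hasDerivAt
  have hid : HasDerivAt (fun x : ℝ => x) 1 t := hasDerivAt_id t
  have hDr : HasDerivAt r ((1 / 4) * (deriv R t * (2 * s - t - R t)
      + R t * (0 - 1 - deriv R t)) - (1 / 2) * deriv (deriv R) t) t := by
    rw [hreq]
    exact (((hDR.const_mul (1/4 : ℝ)).mul (((hasDerivAt_const t (2*s)).sub hid).sub hDR)).sub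
      (hDR'.const_mul (1/2 : ℝ))).congr_deriv (by simp only [Pi.sub_apply]; ring)
  have h1 : deriv r t = (1 / 4) * (deriv R t * (2 * s - t - R t)
      + R t * (0 - 1 - deriv R t)) - (1 / 2) * deriv (deriv R) t := hDr.deriv
  have h2 := hric t
  rw [h1, hr t] at h2
  have hne := hRne t
  field_simp at h2 ⊢
  nlinarith [h2, sq_nonneg (R t)]
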